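/- (Zassenhaus Lemma in an ideal determined category) Let C be an ideal determined category. Let K → U and L → V be kernels and U → A, V → A monomorphisms. Then (K ∨_U (U∩V)) / (K ∨_U (L∩U)) ≅ (U∩V) / ((K∩V) ∨_{U∩V} (L∩U)) ≅ (L ∨_V (U∩V)) / (L ∨_V (K∩V)). -/
import Mathlib


open CategoryTheory CategoryTheory.Limits

universe v u

namespace StarReg

variable {C : Type u} [Category.{v} C]

/-- An ideal of morphisms in the sense of Ehresmann. -/
def IsIdealClass (N : MorphismProperty C) : Prop :=
  (∀ ⦃X Y Z : C⦄ (f : X ⟶ Y) (g : Y ⟶ Z), N f → N (f ≫ g)) ∧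
  (∀ ⦃X Y Z : C⦄ (f : X ⟶ Y) (g : Y ⟶ Z), N g → N (f ≫ g))

/-- `k` is an `N`-kernel of `f`. -/
def IsNKernel (N : MorphismProperty C) {K X Y : C} (k : K ⟶ X) (f : X ⟶ Y) : Prop :=
  N (k ≫ f) ∧ ∀ ⦃L : C⦄ (g : L ⟶ X), N (g ≫ f) → ∃! μ : L ⟶ K, μ ≫ k = g

def HasNKernels (N : MorphismProperty C) : Prop :=
  ∀ ⦃X Y : C⦄ (f : X ⟶ Y), ∃ (K : C) (k : K ⟶ X), IsNKernel N k f

/-- Every morphism factors as a regular epimorphism followed by a monomorphism. -/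
def RegEpiMonoFactorisations (C : Type u) [Category.{v} C] : Prop :=
  ∀ ⦃X Y : C⦄ (f : X ⟶ Y), ∃ (Z : C) (e : X ⟶ Z) (m : Z ⟶ Y),
    Nonempty (RegularEpi e) ∧ Mono m ∧ e ≫ m = f

/-- Regular epimorphisms are stable under pullback. -/
def RegEpisPullbackStable (C : Type u) [Category.{v} C] : Prop :=
  ∀ ⦃P X Y Z : C⦄ (fst : P ⟶ X) (snd : P ⟶ Y) (f : X ⟶ Z) (g : Y ⟶ Z),
    IsPullback fst snd f g → Nonempty (RegularEpi g) → Nonempty (RegularEpi fst)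

/-- A star: a pair of parallel morphisms whose first component lies in `N`. -/
structure Star (N : MorphismProperty C) (X : C) where
  T : C
  a : T ⟶ X
  b : T ⟶ X
  ha : N a

/-- A monic star: the pair is jointly monomorphic. -/
def Star.Monic {N : MorphismProperty C} {X : C} (s : Star N X) : Prop :=
  ∀ ⦃W : C⦄ (u v : W ⟶ s.T), u ≫ s.a = v ≫ s.a → u ≫ s.b = v ≫ s.b → u = v

/-- `s` is the kernel star of `f`. -/
def IsKernelStar {N : MorphismProperty C} {X Y : C} (f : X ⟶ Y) (s : Star N X) : Prop :=
  s.a ≫ f = s.b ≫ f ∧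
  ∀ t : Star N X, t.a ≫ f = t.b ≫ f →
    ∃! u : t.T ⟶ s.T, u ≫ s.a = t.a ∧ u ≫ s.b = t.b

/-- `t` is the (regular epi, monic star) image of the star `s` along `f`. -/
def IsImageFact {N : MorphismProperty C} {X Y : C} (f : X ⟶ Y) (s : Star N X)
    (t : Star N Y) : Prop :=
  t.Monic ∧ ∃ e : s.T ⟶ t.T,
    Nonempty (RegularEpi e) ∧ e ≫ t.a = s.a ≫ f ∧ e ≫ t.b = s.b ≫ f

/-- `f` is a coequaliser of the star `s`. -/
def IsStarCoequalizer {N : MorphismProperty C} {X Q : C} (s : Star N X) (f : X ⟶ Q) : Prop :=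
  s.a ≫ f = s.b ≫ f ∧
  ∀ ⦃W : C⦄ (h : X ⟶ W), s.a ≫ h = s.b ≫ h → ∃! u : Q ⟶ W, f ≫ u = h

/-- `s` is the star `Δ*_X` of the discrete relation on `X`. -/
def IsDeltaStar {N : MorphismProperty C} {X : C} (s : Star N X) : Prop :=
  s.a = s.b ∧ IsNKernel N s.a (𝟙 X)

def RegEpisAreStarCoequalizers (N : MorphismProperty C) : Prop :=
  ∀ ⦃X Y : C⦄ (f : X ⟶ Y), Nonempty (RegularEpi f) →
    ∃ s : Star N X, IsStarCoequalizer s f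

/-- A star-regular category: regular multi-pointed with `N`-kernels, every regular
epimorphism a coequaliser of a star. -/
def StarRegular (N : MorphismProperty C) : Prop :=
  IsIdealClass N ∧ HasNKernels N ∧ RegEpiMonoFactorisations C ∧
    RegEpisPullbackStable C ∧ RegEpisAreStarCoequalizers N

def HasKernelStarCoequalizers (N : MorphismProperty C) : Prop :=
  ∀ ⦃X Y : C⦄ (f : X ⟶ Y) (s : Star N X), IsKernelStar f s →
    ∃ (Q : C) (q : X ⟶ Q), IsStarCoequalizer s q

/-- `f` is saturating: the image of `Δ*` along `f` is `Δ*`. -/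
def Saturating (N : MorphismProperty C) {X Y : C} (f : X ⟶ Y) : Prop :=
  ∀ (s : Star N X) (t : Star N Y), IsDeltaStar s → IsImageFact f s t → IsDeltaStar t

/-- The diamond `e ≫ g = f ≫ h` is right saturated: `f(E*) = H*`. -/
def RightSaturated (N : MorphismProperty C) {X Y Z W : C}
    (e : X ⟶ Z) (f : X ⟶ Y) (_g : Z ⟶ W) (h : Y ⟶ W) : Prop :=
  ∀ (s : Star N X) (t : Star N Y), IsKernelStar e s → IsImageFact f s t → IsKernelStar h t

/-- The diamond `e ≫ g = f ≫ h` is left saturated: `e(F*) = G*`. -/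
def LeftSaturated (N : MorphismProperty C) {X Y Z W : C}
    (e : X ⟶ Z) (f : X ⟶ Y) (g : Z ⟶ W) (_h : Y ⟶ W) : Prop :=
  ∀ (s : Star N X) (t : Star N Z), IsKernelStar f s → IsImageFact e s t → IsKernelStar g t

/-- `s` is a kernel star (of some morphism). -/
def IsAKernelStar {N : MorphismProperty C} {X : C} (s : Star N X) : Prop :=
  ∃ (W : C) (w : X ⟶ W), IsKernelStar w s

/-- Inclusion of stars on the same object. -/
def StarLE {N : MorphismProperty C} {X : C} (s t : Star N X) : Prop :=
  ∃ m : s.T ⟶ t.T, m ≫ t.a = s.a ∧ m ≫ t.b = s.b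

/-- Property (*): images along coequalisers of smaller kernel stars of kernel stars are
kernel stars. -/
def PropertyStar (N : MorphismProperty C) : Prop :=
  ∀ ⦃A Q : C⦄ (F G : Star N A) (f : A ⟶ Q),
    IsKernelStar f F → IsStarCoequalizer F f → IsAKernelStar G → StarLE F G →
    ∀ t : Star N Q, IsImageFact f G t → IsAKernelStar t

/-- `σ` (with comparison `j`) is the star-pullback of `τ` along `g`. -/
def IsStarPullback {N : MorphismProperty C} {X Y : C} (g : X ⟶ Y) (τ : Star N Y)
    (σ : Star N X) (j : σ.T ⟶ τ.T) : Prop :=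
  σ.a ≫ g = j ≫ τ.a ∧ σ.b ≫ g = j ≫ τ.b ∧
  ∀ (ρ : Star N X) (w : ρ.T ⟶ τ.T), ρ.a ≫ g = w ≫ τ.a → ρ.b ≫ g = w ≫ τ.b →
    ∃! h : ρ.T ⟶ σ.T, h ≫ σ.a = ρ.a ∧ h ≫ σ.b = ρ.b ∧ h ≫ j = w

def HasRegEpiPushouts (C : Type u) [Category.{v} C] : Prop :=
  ∀ ⦃X Y Z : C⦄ (f : X ⟶ Y) (g : X ⟶ Z), Nonempty (RegularEpi f) → Nonempty (RegularEpi g) →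
    ∃ (W : C) (p : Y ⟶ W) (q : Z ⟶ W), IsPushout f g p q

end StarReg

namespace PtReg

variable {C : Type u} [Category.{v} C] [HasZeroMorphisms C]

/-- `k` is a kernel of `f` in the pointed sense. -/
def IsPKernel {K X Y : C} (k : K ⟶ X) (f : X ⟶ Y) : Prop :=
  k ≫ f = 0 ∧ ∀ ⦃L : C⦄ (g : L ⟶ X), g ≫ f = 0 → ∃! u : L ⟶ K, u ≫ k = g

/-- `q` is a cokernel of `k` in the pointed sense. -/
def IsPCokernel {K X Q : C} (k : K ⟶ X) (q : X ⟶ Q) : Prop :=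
  k ≫ q = 0 ∧ ∀ ⦃W : C⦄ (h : X ⟶ W), k ≫ h = 0 → ∃! u : Q ⟶ W, q ≫ u = h

/-- A normal monomorphism: a kernel of some morphism. -/
def IsNormalMonoP {K X : C} (k : K ⟶ X) : Prop :=
  ∃ (Y : C) (f : X ⟶ Y), IsPKernel k f

/-- Every regular epimorphism is a normal epimorphism (a cokernel). -/
def RegEpisAreNormal (C : Type u) [Category.{v} C] [HasZeroMorphisms C] : Prop :=
  ∀ ⦃X Y : C⦄ (f : X ⟶ Y), Nonempty (RegularEpi f) →
    ∃ (K : C) (k : K ⟶ X), IsPCokernel k f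

/-- A normal category: pointed regular, every regular epi normal. -/
def NormalCat (C : Type u) [Category.{v} C] [HasZeroMorphisms C] : Prop :=
  StarReg.RegEpiMonoFactorisations C ∧ StarReg.RegEpisPullbackStable C ∧ RegEpisAreNormal C

/-- An internal equivalence relation. -/
def IsEquivRelPair {R X : C} (r1 r2 : R ⟶ X) : Prop :=
  (∀ ⦃W : C⦄ (u v : W ⟶ R), u ≫ r1 = v ≫ r1 → u ≫ r2 = v ≫ r2 → u = v) ∧
  (∃ d : X ⟶ R, d ≫ r1 = 𝟙 X ∧ d ≫ r2 = 𝟙 X) ∧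
  (∃ s : R ⟶ R, s ≫ r1 = r2 ∧ s ≫ r2 = r1) ∧
  (∀ ⦃P : C⦄ (p1 p2 : P ⟶ R), IsPullback p1 p2 r2 r1 →
    ∃ t : P ⟶ R, t ≫ r1 = p1 ≫ r1 ∧ t ≫ r2 = p2 ≫ r2)

/-- Barr-exactness: every equivalence relation is effective (a kernel pair). -/
def EquivRelsEffective (C : Type u) [Category.{v} C] : Prop :=
  ∀ ⦃R X : C⦄ (r1 r2 : R ⟶ X), IsEquivRelPair r1 r2 →
    ∃ (Y : C) (q : X ⟶ Y), IsPullback r1 r2 q q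

/-- Protomodularity in the pointed context: the split short five lemma. -/
def SplitShortFive (C : Type u) [Category.{v} C] [HasZeroMorphisms C] : Prop :=
  ∀ ⦃K A B K' A' B' : C⦄ (k : K ⟶ A) (p : A ⟶ B) (s : B ⟶ A)
    (k' : K' ⟶ A') (p' : A' ⟶ B') (s' : B' ⟶ A')
    (κ : K ⟶ K') (α : A ⟶ A') (β : B ⟶ B'),
    IsPKernel k p → IsPKernel k' p' → s ≫ p = 𝟙 B → s' ≫ p' = 𝟙 B' →
    k ≫ α = κ ≫ k' → p ≫ β = α ≫ p' → s ≫ α = β ≫ s' →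
    IsIso κ → IsIso β → IsIso α

/-- A semi-abelian category: pointed, regular, Barr-exact, protomodular
(with a zero object, finite limits and binary coproducts as instance hypotheses). -/
def SemiAbelianCat (C : Type u) [Category.{v} C] [HasZeroMorphisms C] : Prop :=
  StarReg.RegEpiMonoFactorisations C ∧ StarReg.RegEpisPullbackStable C ∧
    EquivRelsEffective C ∧ SplitShortFive C

end PtReg

namespace PtRegAux

open PtReg StarReg

variable {C : Type u} [Category.{v} C] [HasZeroMorphisms C]

/-- A pointed cokernel is a regular epi. -/
theorem regEpi_of_pcoker {K X Q : C} {k : K ⟶ X} {q : X ⟶ Q} (h : IsPCokernel k q) :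
    Nonempty (RegularEpi q) := by
  refine ⟨⟨K, k, 0, by rw [h.1, zero_comp], ?_⟩⟩
  apply Cofork.IsColimit.ofExistsUnique
  intro s
  have hs : k ≫ s.π = 0 := by simpa using s.condition
  obtain ⟨u, hu, hu'⟩ := h.2 s.π hs
  exact ⟨u, by simpa using hu, fun y hy => hu' y (by simpa using hy)⟩

theorem epi_of_pcoker {K X Q : C} {k : K ⟶ X} {q : X ⟶ Q} (h : IsPCokernel k q) :
    Epi q := by
  constructor
  intro Z a b hab
  obtain ⟨u, hu, hu'⟩ := h.2 (q ≫ a) (by rw [reassoc_of% h.1, zero_comp])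
  rw [hu' a rfl, hu' b hab.symm]

theorem mono_of_pker {K X Y : C} {k : K ⟶ X} {f : X ⟶ Y} (h : IsPKernel k f) :
    Mono k := by
  constructor
  intro Z a b hab
  obtain ⟨u, hu, hu'⟩ := h.2 (a ≫ k) (by rw [Category.assoc, h.1, comp_zero])
  rw [hu' a rfl, hu' b hab.symm]

/-- A normal mono is a kernel of its cokernel. -/
theorem pker_of_normal {K X Q : C} {k : K ⟶ X} {q : X ⟶ Q}
    (hk : IsNormalMonoP k) (hq : IsPCokernel k q) : IsPKernel k q := by
  obtain ⟨Y, f, hf⟩ := hk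
  refine ⟨hq.1, fun L g hg => ?_⟩
  obtain ⟨t, ht, -⟩ := hq.2 f hf.1
  exact hf.2 g (by rw [← ht, reassoc_of% hg, zero_comp])

/-- A regular epi is a cokernel of its kernel (in a normal category). -/
theorem pcoker_of_pker_of_regEpi (hne : RegEpisAreNormal C)
    {K X Q : C} {k : K ⟶ X} {q : X ⟶ Q}
    (hq : Nonempty (RegularEpi q)) (hk : IsPKernel k q) : IsPCokernel k q := by
  obtain ⟨K₀, k₀, hk₀⟩ := hne q hq
  refine ⟨hk.1, fun W h hh => ?_⟩
  obtain ⟨y, hy, -⟩ := hk.2 k₀ hk₀.1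
  exact hk₀.2 h (by rw [← hy, Category.assoc, hh, comp_zero])

/-- Pullback of a kernel is a kernel of the composite. -/
theorem pker_pullback {K X Y P Z : C} {k : K ⟶ X} {f : X ⟶ Y} (hk : IsPKernel k f)
    {g : Z ⟶ X} {p₁ : P ⟶ K} {p₂ : P ⟶ Z} (hP : IsPullback p₁ p₂ k g) :
    IsPKernel p₂ (g ≫ f) := by
  have hkm : Mono k := mono_of_pker hk
  constructor
  · rw [← Category.assoc, ← hP.w, Category.assoc, hk.1, comp_zero]
  · intro L x hx
    obtain ⟨y, hy, -⟩ := hk.2 (x ≫ g) (by rw [Category.assoc, hx])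
    refine ⟨hP.lift y x hy, hP.lift_snd _ _ _, fun z hz => ?_⟩
    have hz' : z ≫ p₂ = x := hz
    apply hP.hom_ext ?_ (by rw [hP.lift_snd, hz'])
    rw [hP.lift_fst, ← cancel_mono k, Category.assoc, hP.w, ← Category.assoc, hz']
    exact hy.symm

/-- Cokernels are stable under pushout. -/
theorem pcoker_pushout {A X Y Z P : C} {w : A ⟶ X} {f : X ⟶ Y} {g : X ⟶ Z}
    {p : Y ⟶ P} {q : Z ⟶ P} (hpo : IsPushout f g p q) (hg : IsPCokernel w g) :
    IsPCokernel (w ≫ f) p := by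
  have hge : Epi g := epi_of_pcoker hg
  constructor
  · rw [Category.assoc, hpo.w, reassoc_of% hg.1, zero_comp]
  · intro W h hh
    obtain ⟨t, ht, -⟩ := hg.2 (f ≫ h) (by rwa [← Category.assoc])
    refine ⟨hpo.desc h t ht.symm, hpo.inl_desc _ _ _, fun u hu => ?_⟩
    apply hpo.hom_ext (by rw [hpo.inl_desc, hu])
    rw [hpo.inr_desc, ← cancel_epi g, ht, ← hu, ← hpo.w_assoc]

/-- Uniqueness of cokernels. -/
theorem pcoker_unique {K X Q Q' : C} {k : K ⟶ X} {q : X ⟶ Q} {q' : X ⟶ Q'}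
    (h : IsPCokernel k q) (h' : IsPCokernel k q') : Nonempty (Q ≅ Q') := by
  obtain ⟨u, hu, -⟩ := h.2 q' h'.1
  obtain ⟨u', hu', -⟩ := h'.2 q h.1
  obtain ⟨i, hi, hiu⟩ := h.2 q h.1
  obtain ⟨i', hi', hiu'⟩ := h'.2 q' h'.1
  exact ⟨⟨u, u', by rw [hiu (u ≫ u') (by show q ≫ u ≫ u' = q; rw [← Category.assoc, hu, hu']), hiu (𝟙 _) (by show q ≫ 𝟙 _ = q; simp)],
    by rw [hiu' (u' ≫ u) (by show q' ≫ u' ≫ u = q'; rw [← Category.assoc, hu', hu]), hiu' (𝟙 _) (by show q' ≫ 𝟙 _ = q'; simp)]⟩⟩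

theorem epi_of_regEpi {A B : C} {e : A ⟶ B} (he : Nonempty (RegularEpi e)) : Epi e := by
  obtain ⟨re⟩ := he
  exact ⟨fun a b hab => Cofork.IsColimit.hom_ext re.isColimit hab⟩

/-- Regular epi / mono lifting. -/
theorem regEpi_mono_lift {A B X Y : C} {e : A ⟶ B} (he : Nonempty (RegularEpi e))
    {m : X ⟶ Y} (hm : Mono m) {f : A ⟶ X} {g : B ⟶ Y} (sq : e ≫ g = f ≫ m) :
    ∃ d : B ⟶ X, e ≫ d = f ∧ d ≫ m = g := by
  have hee : Epi e := epi_of_regEpi he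
  obtain ⟨re⟩ := he
  have h1 : re.left ≫ f = re.right ≫ f := by
    rw [← cancel_mono m, Category.assoc, Category.assoc, ← sq, re.w_assoc]
  obtain ⟨d, hd⟩ := Cofork.IsColimit.desc' re.isColimit f h1
  have hd' : e ≫ d = f := by simpa using hd
  refine ⟨d, hd', ?_⟩
  rw [← cancel_epi e, reassoc_of% hd', sq]

theorem mono_of_pullback_mono {P X Y Z : C} {pI : P ⟶ X} {pA : P ⟶ Y} {n : X ⟶ Z} {f : Y ⟶ Z}
    (hP : IsPullback pI pA n f) (hn : Mono n) : Mono pA := by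
  constructor
  intro W a b hab
  have h1 : a ≫ pI = b ≫ pI := by
    rw [← cancel_mono n, Category.assoc, Category.assoc, hP.w, ← Category.assoc, hab,
      Category.assoc, ← hP.w]
  exact hP.hom_ext h1 hab

set_option maxHeartbeats 1000000 in
/-- One side of the Zassenhaus lemma: the composite `W ⟶ P₁ ⟶ Q₁` is a cokernel of `mM`. -/
theorem zassenhaus_side
    (hnc : NormalCat C)
    (hid : ∀ ⦃K X Y Z : C⦄ (k : K ⟶ X) (f : X ⟶ Y) (e : K ⟶ Z) (n : Z ⟶ Y),
      IsNormalMonoP k → Nonempty (RegularEpi f) → Nonempty (RegularEpi e) → Mono n →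
      e ≫ n = k ≫ f → IsNormalMonoP n)
    {K U : C} (k : K ⟶ U) (hk : IsNormalMonoP k)
    {QU : C} (fU : U ⟶ QU) (hfU : IsPCokernel k fU)
    {W : C} (iU : W ⟶ U)
    {KV : C} (kvW : KV ⟶ W) (hkvW : IsPKernel kvW (iU ≫ fU))
    {LU : C} (luW : LU ⟶ W) (hluW : IsNormalMonoP luW)
    {W₁ : C} (f₁ : W ⟶ W₁) (hf₁ : IsPCokernel kvW f₁)
    {Tq : C} (p₁ : W₁ ⟶ Tq) (hp₁ : IsPCokernel (luW ≫ f₁) p₁)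
    {MM : C} (mM : MM ⟶ W) (hmM : IsPKernel mM (f₁ ≫ p₁))
    {WU : C} (e₁ : W ⟶ WU) (n₁ : WU ⟶ QU) (he₁ : Nonempty (RegularEpi e₁)) (hn₁ : Mono n₁)
    (hfact₁ : e₁ ≫ n₁ = iU ≫ fU)
    {P₁ : C} (pI₁ : P₁ ⟶ WU) (pA₁ : P₁ ⟶ U) (hP₁ : IsPullback pI₁ pA₁ n₁ fU)
    {WU' : C} (e₁' : LU ⟶ WU') (n₁' : WU' ⟶ QU) (he₁' : Nonempty (RegularEpi e₁'))
    (hn₁' : Mono n₁') (hfact₁' : e₁' ≫ n₁' = luW ≫ iU ≫ fU)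
    {P₁' : C} (pI₁' : P₁' ⟶ WU') (pA₁' : P₁' ⟶ U) (hP₁' : IsPullback pI₁' pA₁' n₁' fU)
    (r₁ : P₁' ⟶ P₁) (hr₁c : r₁ ≫ pA₁ = pA₁')
    {Q₁ : C} (q₁ : P₁ ⟶ Q₁) (hq₁ : IsPCokernel r₁ q₁) :
    ∃ φ : W ⟶ Q₁, IsPCokernel mM φ := by
  obtain ⟨hfac, hstab, hne⟩ := hnc
  have hfUre : Nonempty (RegularEpi fU) := regEpi_of_pcoker hfU
  have hkker : IsPKernel k fU := pker_of_normal hk hfU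
  have hkm : Mono k := mono_of_pker hkker
  have hpA₁ : Mono pA₁ := mono_of_pullback_mono hP₁ hn₁
  have hpA₁' : Mono pA₁' := mono_of_pullback_mono hP₁' hn₁'
  have hpI₁re : Nonempty (RegularEpi pI₁) := hstab _ _ _ _ hP₁ hfUre
  -- the comparison `w₁ : W ⟶ P₁`
  set w₁ : W ⟶ P₁ := hP₁.lift e₁ iU hfact₁ with hw₁def
  have hw₁I : w₁ ≫ pI₁ = e₁ := hP₁.lift_fst _ _ _
  have hw₁A : w₁ ≫ pA₁ = iU := hP₁.lift_snd _ _ _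
  -- `kvW` is a kernel (hence `e₁` a cokernel) of `e₁`
  have hkE : IsPKernel kvW e₁ := by
    constructor
    · rw [← cancel_mono n₁, Category.assoc, hfact₁, hkvW.1, zero_comp]
    · intro L x hx
      exact hkvW.2 x (by rw [← hfact₁, ← Category.assoc, hx, zero_comp])
  have hcokE : IsPCokernel kvW e₁ := pcoker_of_pker_of_regEpi hne he₁ hkE
  -- `κ : K ⟶ P₁` and `κ' : K ⟶ P₁'`
  set κ : K ⟶ P₁ := hP₁.lift 0 k (by rw [zero_comp, hfU.1]) with hκdef
  have hκI : κ ≫ pI₁ = (0 : K ⟶ WU) := hP₁.lift_fst _ _ _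
  have hκA : κ ≫ pA₁ = k := hP₁.lift_snd _ _ _
  set κ' : K ⟶ P₁' := hP₁'.lift 0 k (by rw [zero_comp, hfU.1]) with hκ'def
  have hκ'A : κ' ≫ pA₁' = k := hP₁'.lift_snd _ _ _
  have hκr : κ' ≫ r₁ = κ := by
    rw [← cancel_mono pA₁, Category.assoc, hr₁c, hκ'A, hκA]
  -- `κ` is a kernel (hence `pI₁` a cokernel) of `pI₁`
  have hκmono : Mono κ := by
    have : Mono (κ ≫ pA₁) := by rw [hκA]; exact hkm
    exact mono_of_mono κ pA₁
  have hκker : IsPKernel κ pI₁ := by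
    refine ⟨hκI, fun L x hx => ?_⟩
    obtain ⟨y, hy, -⟩ := hkker.2 (x ≫ pA₁)
      (by rw [Category.assoc, ← hP₁.w, ← Category.assoc, hx, zero_comp])
    have hy' : y ≫ k = x ≫ pA₁ := hy
    refine ⟨y, ?_, fun z hz => ?_⟩
    · apply hP₁.hom_ext
      · rw [Category.assoc, hκI, comp_zero, hx]
      · rw [Category.assoc, hκA, hy']
    · have hz' : z ≫ κ = x := hz
      rw [← cancel_mono κ, hz']
      apply hP₁.hom_ext
      · rw [Category.assoc, hκI, comp_zero, hx]
      · rw [Category.assoc, hκA, hy']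
  have hκcok : IsPCokernel κ pI₁ := pcoker_of_pker_of_regEpi hne hpI₁re hκker
  -- `luW` and `kvW` factor through `mM`
  obtain ⟨fLU, hfLU0, -⟩ := hmM.2 luW (by rw [← Category.assoc]; exact hp₁.1)
  have hfLU : fLU ≫ mM = luW := hfLU0
  obtain ⟨κv, hκv0, -⟩ := hmM.2 kvW (by rw [← Category.assoc, hf₁.1, zero_comp])
  have hκv : κv ≫ mM = kvW := hκv0
  -- `t : W₁ ⟶ QU` with `f₁ ≫ t = iU ≫ fU`
  obtain ⟨t, ht0, -⟩ := hf₁.2 (iU ≫ fU) hkvW.1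
  have ht : f₁ ≫ t = iU ≫ fU := ht0
  -- image factorisation of `luW ≫ f₁`
  obtain ⟨Z, e', n', he', hn', hfactZ⟩ := hfac (luW ≫ f₁)
  have hf₁re : Nonempty (RegularEpi f₁) := regEpi_of_pcoker hf₁
  have hn'nm : IsNormalMonoP n' := hid luW f₁ e' n' hluW hf₁re he' hn' hfactZ
  have he'e : Epi e' := epi_of_regEpi he'
  -- `p₁` is a cokernel of `n'`, hence `n'` is its kernel
  have hp₁n' : IsPCokernel n' p₁ := by
    constructor
    · rw [← cancel_epi e', ← Category.assoc, hfactZ, hp₁.1, comp_zero]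
    · intro T h hh
      exact hp₁.2 h (by rw [← hfactZ, Category.assoc, hh, comp_zero])
  have hn'ker : IsPKernel n' p₁ := pker_of_normal hn'nm hp₁n'
  obtain ⟨z, hz0, -⟩ := hn'ker.2 (mM ≫ f₁) (by rw [Category.assoc]; exact hmM.1)
  have hz : z ≫ n' = mM ≫ f₁ := hz0
  -- `d : Z ⟶ WU'`
  have hsq_d : e' ≫ (n' ≫ t) = e₁' ≫ n₁' := by
    rw [← Category.assoc, hfactZ, Category.assoc, ht, hfact₁']
  obtain ⟨d, hde, hdn⟩ := regEpi_mono_lift he' hn₁' hsq_d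
  -- `m' : MM ⟶ P₁'`
  have hsq_m : (z ≫ d) ≫ n₁' = (mM ≫ iU) ≫ fU := by
    simp only [Category.assoc, hdn]
    rw [← Category.assoc z n' t, hz, Category.assoc, ht]
  set m' : MM ⟶ P₁' := hP₁'.lift (z ≫ d) (mM ≫ iU) hsq_m with hm'def
  have hm'A : m' ≫ pA₁' = mM ≫ iU := hP₁'.lift_snd _ _ _
  have hmw : m' ≫ r₁ = mM ≫ w₁ := by
    rw [← cancel_mono pA₁, Category.assoc, hr₁c, hm'A, Category.assoc, hw₁A]
  -- `s : WU' ⟶ WU`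
  have hsq_s : e₁' ≫ n₁' = (luW ≫ e₁) ≫ n₁ := by
    rw [hfact₁', Category.assoc, hfact₁]
  obtain ⟨s, hse, hsn⟩ := regEpi_mono_lift he₁' hn₁ hsq_s
  have he₁'e : Epi e₁' := epi_of_regEpi he₁'
  have hrs : r₁ ≫ pI₁ = pI₁' ≫ s := by
    rw [← cancel_mono n₁, Category.assoc, hP₁.w, ← Category.assoc, hr₁c,
      Category.assoc, hsn, hP₁'.w]
  -- the cokernel condition
  have hcond : mM ≫ (w₁ ≫ q₁) = 0 := by
    rw [← Category.assoc, ← hmw, Category.assoc, hq₁.1, comp_zero]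
  refine ⟨w₁ ≫ q₁, hcond, fun T h hh => ?_⟩
  -- factor `h` through `e₁`
  obtain ⟨h', hh'0, -⟩ := hcokE.2 h (by rw [← hκv, Category.assoc, hh, comp_zero])
  have hh' : e₁ ≫ h' = h := hh'0
  have hsh : s ≫ h' = 0 := by
    rw [← cancel_epi e₁', ← Category.assoc, hse, Category.assoc, hh', ← hfLU,
      Category.assoc, hh, comp_zero, comp_zero]
  have hrv : r₁ ≫ (pI₁ ≫ h') = 0 := by
    rw [← Category.assoc, hrs, Category.assoc, hsh, comp_zero]
  obtain ⟨u, hu0, -⟩ := hq₁.2 (pI₁ ≫ h') hrv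
  have hu : q₁ ≫ u = pI₁ ≫ h' := hu0
  have hq₁e : Epi q₁ := epi_of_pcoker hq₁
  have hee₁ : Epi e₁ := epi_of_regEpi he₁
  have huh : (w₁ ≫ q₁) ≫ u = h := by
    rw [Category.assoc, hu, ← Category.assoc, hw₁I, hh']
  refine ⟨u, huh, fun y hy0 => ?_⟩
  have hy : (w₁ ≫ q₁) ≫ y = h := hy0
  have hκq : κ ≫ q₁ = 0 := by rw [← hκr, Category.assoc, hq₁.1, comp_zero]
  obtain ⟨a₀, ha₀0, -⟩ := hκcok.2 (q₁ ≫ y) (by rw [← Category.assoc, hκq, zero_comp])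
  have ha₀ : pI₁ ≫ a₀ = q₁ ≫ y := ha₀0
  obtain ⟨b₀, hb₀0, -⟩ := hκcok.2 (q₁ ≫ u) (by rw [← Category.assoc, hκq, zero_comp])
  have hb₀ : pI₁ ≫ b₀ = q₁ ≫ u := hb₀0
  have hab : a₀ = b₀ := by
    rw [← cancel_epi e₁, ← hw₁I, Category.assoc, Category.assoc, ha₀, hb₀,
      ← Category.assoc, ← Category.assoc, hy, huh]
  have hqy : q₁ ≫ y = q₁ ≫ u := by rw [← ha₀, ← hb₀, hab]
  exact (cancel_epi q₁).mp hqy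

end PtRegAux


open CategoryTheory CategoryTheory.Limits StarReg PtReg in
/-- The Zassenhaus Lemma in an ideal determined category. -/
theorem statement14 {C : Type u} [Category.{v} C] [HasZeroMorphisms C] [HasZeroObject C]
    [HasBinaryCoproducts C] (hfl : HasFiniteLimits C) (hnc : NormalCat C)
    -- ideal determined: regular images of normal monos are normal monos
    (hid : ∀ ⦃K X Y Z : C⦄ (k : K ⟶ X) (f : X ⟶ Y) (e : K ⟶ Z) (n : Z ⟶ Y),
      IsNormalMonoP k → Nonempty (RegularEpi f) → Nonempty (RegularEpi e) → Mono n →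
      e ≫ n = k ≫ f → IsNormalMonoP n)
    -- kernels `k : K ⟶ U`, `l : L ⟶ V` and monos `u : U ⟶ A`, `v : V ⟶ A`
    {K U L V A : C} (k : K ⟶ U) (hk : IsNormalMonoP k) (l : L ⟶ V) (hl : IsNormalMonoP l)
    (u : U ⟶ A) (hu : Mono u) (v : V ⟶ A) (hv : Mono v)
    -- the intersection `W = U ∩ V`
    {W : C} (iU : W ⟶ U) (iV : W ⟶ V) (hW : IsPullback iU iV u v)
    -- `K ∩ V` as a subobject of `W`, and `L ∩ U` as a subobject of `W`
    {KV : C} (kvK : KV ⟶ K) (kvW : KV ⟶ W) (hKV : IsPullback kvK kvW k iU)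
    {LU : C} (luL : LU ⟶ L) (luW : LU ⟶ W) (hLU : IsPullback luL luW l iV)
    -- cokernels of `K∩V → W` and `L∩U → W`, their pushout and its diagonal
    {W₁ : C} (f₁ : W ⟶ W₁) (hf₁ : IsPCokernel kvW f₁)
    {W₂ : C} (g₁ : W ⟶ W₂) (hg₁ : IsPCokernel luW g₁)
    {Tq : C} (p₁ : W₁ ⟶ Tq) (p₂ : W₂ ⟶ Tq) (hpush : IsPushout f₁ g₁ p₁ p₂)
    -- the supremum `(K∩V) ∨ (L∩U)`: kernel of the diagonal
    {MM : C} (mM : MM ⟶ W) (hmM : IsPKernel mM (f₁ ≫ p₁))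
    -- the middle quotient `(U∩V)/((K∩V) ∨ (L∩U))`
    {QM : C} (qMid : W ⟶ QM) (hqMid : IsPCokernel mM qMid)
    -- U-side: cokernel `fU` of `k`, join `P₁ = K ∨_U (U∩V)`
    {QU : C} (fU : U ⟶ QU) (hfU : IsPCokernel k fU)
    {WU : C} (e₁ : W ⟶ WU) (n₁ : WU ⟶ QU) (he₁ : Nonempty (RegularEpi e₁)) (hn₁ : Mono n₁)
    (hfact₁ : e₁ ≫ n₁ = iU ≫ fU)
    {P₁ : C} (pI₁ : P₁ ⟶ WU) (pA₁ : P₁ ⟶ U) (hP₁ : IsPullback pI₁ pA₁ n₁ fU)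
    -- `K ∨_U (L∩U)` as a subobject of `U`
    {WU' : C} (e₁' : LU ⟶ WU') (n₁' : WU' ⟶ QU) (he₁' : Nonempty (RegularEpi e₁'))
    (hn₁' : Mono n₁') (hfact₁' : e₁' ≫ n₁' = luW ≫ iU ≫ fU)
    {P₁' : C} (pI₁' : P₁' ⟶ WU') (pA₁' : P₁' ⟶ U) (hP₁' : IsPullback pI₁' pA₁' n₁' fU)
    -- the induced inclusion `K ∨_U (L∩U) ⟶ K ∨_U (U∩V)` and the quotient
    (r₁ : P₁' ⟶ P₁) (hr₁ : Mono r₁) (hr₁c : r₁ ≫ pA₁ = pA₁')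
    {Q₁ : C} (q₁ : P₁ ⟶ Q₁) (hq₁ : IsPCokernel r₁ q₁)
    -- V-side: cokernel `gV` of `l`, join `P₂ = L ∨_V (U∩V)`
    {QV : C} (gV : V ⟶ QV) (hgV : IsPCokernel l gV)
    {WV : C} (e₂ : W ⟶ WV) (n₂ : WV ⟶ QV) (he₂ : Nonempty (RegularEpi e₂)) (hn₂ : Mono n₂)
    (hfact₂ : e₂ ≫ n₂ = iV ≫ gV)
    {P₂ : C} (pI₂ : P₂ ⟶ WV) (pA₂ : P₂ ⟶ V) (hP₂ : IsPullback pI₂ pA₂ n₂ gV)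
    -- `L ∨_V (K∩V)` as a subobject of `V`
    {WV' : C} (e₂' : KV ⟶ WV') (n₂' : WV' ⟶ QV) (he₂' : Nonempty (RegularEpi e₂'))
    (hn₂' : Mono n₂') (hfact₂' : e₂' ≫ n₂' = kvW ≫ iV ≫ gV)
    {P₂' : C} (pI₂' : P₂' ⟶ WV') (pA₂' : P₂' ⟶ V) (hP₂' : IsPullback pI₂' pA₂' n₂' gV)
    (r₂ : P₂' ⟶ P₂) (hr₂ : Mono r₂) (hr₂c : r₂ ≫ pA₂ = pA₂')
    {Q₂ : C} (q₂ : P₂ ⟶ Q₂) (hq₂ : IsPCokernel r₂ q₂) :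
    Nonempty (Q₁ ≅ QM) ∧ Nonempty (QM ≅ Q₂) := by
  have hkker : IsPKernel k fU := PtRegAux.pker_of_normal hk hfU
  have hlker : IsPKernel l gV := PtRegAux.pker_of_normal hl hgV
  have hkvWker : IsPKernel kvW (iU ≫ fU) := PtRegAux.pker_pullback hkker hKV
  have hluWker : IsPKernel luW (iV ≫ gV) := PtRegAux.pker_pullback hlker hLU
  have hluWnm : IsNormalMonoP luW := ⟨_, _, hluWker⟩
  have hkvWnm : IsNormalMonoP kvW := ⟨_, _, hkvWker⟩
  have hp₁cok : IsPCokernel (luW ≫ f₁) p₁ := PtRegAux.pcoker_pushout hpush hg₁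
  have hp₂cok : IsPCokernel (kvW ≫ g₁) p₂ := PtRegAux.pcoker_pushout hpush.flip hf₁
  have hmM2 : IsPKernel mM (g₁ ≫ p₂) := by rwa [← hpush.w]
  obtain ⟨φ₁, hφ₁⟩ := PtRegAux.zassenhaus_side hnc hid k hk fU hfU iU kvW hkvWker luW
    hluWnm f₁ hf₁ p₁ hp₁cok mM hmM e₁ n₁ he₁ hn₁ hfact₁ pI₁ pA₁ hP₁ e₁' n₁' he₁' hn₁'
    hfact₁' pI₁' pA₁' hP₁' r₁ hr₁c q₁ hq₁
  obtain ⟨φ₂, hφ₂⟩ := PtRegAux.zassenhaus_side hnc hid l hl gV hgV iV luW hluWker kvW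
    hkvWnm g₁ hg₁ p₂ hp₂cok mM hmM2 e₂ n₂ he₂ hn₂ hfact₂ pI₂ pA₂ hP₂ e₂' n₂' he₂' hn₂'
    hfact₂' pI₂' pA₂' hP₂' r₂ hr₂c q₂ hq₂
  exact ⟨PtRegAux.pcoker_unique hφ₁ hqMid, PtRegAux.pcoker_unique hqMid hφ₂⟩
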